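/- Let y1, y2 : [0,T] → ℝ be twice continuously differentiable, suppose there exists t* ∈ (0,T) with |y1'(t*) − y2'(t*)| ≥ c1 > 0, and let c2 := sup_{t∈[0,T]}(|y1''| + |y2''|) < ∞. If the interval [t* − c1/(4c2), t* + c1/(4c2)] is contained in (0,T), then there exists a subinterval [l1, l2] of it with l2 − l1 = c1/(8c2) such that inf_{t∈[l1,l2]} |y1(t) − y2(t)| ≥ c1²/(16c2). -/

import Mathlib

open Set

lemma aux_key (c1 c2 tstar : ℝ) (g : ℝ → ℝ)
    (hgdiff : Differentiable ℝ g)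
    (hgdiff' : Differentiable ℝ (deriv g))
    (hc1 : 0 < c1) (hc2 : 0 < c2)
    (hd : c1 ≤ deriv g tstar)
    (hbound : ∀ t ∈ Set.Icc (tstar - c1/(4*c2)) (tstar + c1/(4*c2)), |deriv (deriv g) t| ≤ c2) :
    ∃ l1 l2 : ℝ, Set.Icc l1 l2 ⊆ Set.Icc (tstar - c1/(4*c2)) (tstar + c1/(4*c2)) ∧
      l2 - l1 = c1/(8*c2) ∧ ∀ t ∈ Set.Icc l1 l2, c1^2/(16*c2) ≤ |g t| := by
  set δ := c1/(4*c2) with hδ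
  have hδpos : 0 < δ := by positivity
  set I := Set.Icc (tstar - δ) (tstar + δ) with hI
  have hconv : Convex ℝ I := convex_Icc _ _
  have htsI : tstar ∈ I := ⟨by linarith, by linarith⟩
  -- Step A : deriv g ≥ 3c1/4 on I
  have stepA : ∀ t ∈ I, 3*c1/4 ≤ deriv g t := by
    intro t ht
    have h1 : ‖deriv g t - deriv g tstar‖ ≤ c2 * ‖t - tstar‖ := by
      apply hconv.norm_image_sub_le_of_norm_hasDerivWithin_le
        (f' := deriv (deriv g))
        (fun x _ => ((hgdiff' x).hasDerivAt).hasDerivWithinAt)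
        (fun x hx => by simpa using hbound x hx) htsI ht
    have h2 : |t - tstar| ≤ δ := by
      rw [abs_le]; constructor <;> [linarith [ht.1]; linarith [ht.2]]
    have h3 : c2 * |t - tstar| ≤ c2 * δ := by
      exact mul_le_mul_of_nonneg_left h2 hc2.le
    have h4 : c2 * δ = c1/4 := by rw [hδ]; field_simp
    have h5 : |deriv g t - deriv g tstar| ≤ c1/4 := by
      calc |deriv g t - deriv g tstar| ≤ c2 * |t - tstar| := h1
        _ ≤ c2 * δ := h3
        _ = c1/4 := h4
    have := abs_le.mp h5
    linarith [this.1]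
  -- Step B : slope bound
  set c : ℝ := 3*c1/4 with hc
  have hder : ∀ x : ℝ, HasDerivAt (fun x => g x - c * x) (deriv g x - c) x := by
    intro x
    exact ((hgdiff x).hasDerivAt).sub (by simpa using (hasDerivAt_id x).const_mul c)
  have mono : MonotoneOn (fun x => g x - c * x) I := by
    apply monotoneOn_of_deriv_nonneg hconv
    · exact (hgdiff.continuous.sub (continuous_const.mul continuous_id)).continuousOn
    · intro x hx
      exact ((hder x).differentiableAt).differentiableWithinAt
    · intro x hx
      rw [(hder x).deriv]
      have hxI : x ∈ I := interior_subset hx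
      have := stepA x hxI
      simp only [hc]; linarith
  have slope : ∀ s ∈ I, ∀ t ∈ I, s ≤ t → c * (t - s) ≤ g t - g s := by
    intro s hs t ht hst
    have := mono hs ht hst
    simp only at this
    nlinarith
  -- key numeric fact
  have hnum : c1^2/(16*c2) ≤ c * (δ/2) := by
    have : c * (δ/2) = 3*c1^2/(32*c2) := by rw [hc, hδ]; field_simp; ring
    rw [this, div_le_div_iff₀ (by positivity) (by positivity)]
    nlinarith
  rcases le_or_gt 0 (g tstar) with hpos | hneg
  · refine ⟨tstar + δ/2, tstar + δ, ?_, ?_, ?_⟩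
    · exact Set.Icc_subset_Icc (by linarith) le_rfl
    · rw [hδ]; field_simp; ring
    · intro t ht
      have htI : t ∈ I := ⟨by linarith [ht.1], ht.2⟩
      have hkey := slope tstar htsI t htI (by linarith [ht.1])
      have h1 : c * (δ/2) ≤ c * (t - tstar) := by
        apply mul_le_mul_of_nonneg_left (by linarith [ht.1]) (by rw [hc]; positivity)
      have : c1^2/(16*c2) ≤ g t := by linarith
      exact le_trans this (le_abs_self _)
  · refine ⟨tstar - δ, tstar - δ/2, ?_, ?_, ?_⟩
    · exact Set.Icc_subset_Icc le_rfl (by linarith)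
    · rw [hδ]; field_simp; ring
    · intro t ht
      have htI : t ∈ I := ⟨ht.1, by linarith [ht.2]⟩
      have hkey := slope t htI tstar htsI (by linarith [ht.2])
      have h1 : c * (δ/2) ≤ c * (tstar - t) := by
        apply mul_le_mul_of_nonneg_left (by linarith [ht.2]) (by rw [hc]; positivity)
      have : c1^2/(16*c2) ≤ -(g t) := by linarith
      exact le_trans this (neg_le_abs _)

theorem stmt_1 (T c1 c2 : ℝ) (y1 y2 : ℝ → ℝ) (tstar : ℝ)
    (hy1 : ContDiff ℝ 2 y1) (hy2 : ContDiff ℝ 2 y2)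
    (htstar : tstar ∈ Set.Ioo (0:ℝ) T)
    (hc1 : 0 < c1)
    (hgap : c1 ≤ |deriv y1 tstar - deriv y2 tstar|)
    (hc2 : ∀ t ∈ Set.Icc (0:ℝ) T, |deriv (deriv y1) t| + |deriv (deriv y2) t| ≤ c2)
    (hsub : Set.Icc (tstar - c1/(4*c2)) (tstar + c1/(4*c2)) ⊆ Set.Ioo (0:ℝ) T) :
    ∃ l1 l2 : ℝ,
      Set.Icc l1 l2 ⊆ Set.Icc (tstar - c1/(4*c2)) (tstar + c1/(4*c2)) ∧
      l2 - l1 = c1/(8*c2) ∧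
      ∀ t ∈ Set.Icc l1 l2, c1^2/(16*c2) ≤ |y1 t - y2 t| := by
  have hc2nn : 0 ≤ c2 := by
    have := hc2 tstar ⟨htstar.1.le, htstar.2.le⟩
    have := abs_nonneg (deriv (deriv y1) tstar)
    have := abs_nonneg (deriv (deriv y2) tstar)
    linarith
  rcases eq_or_lt_of_le hc2nn with hc2z | hc2pos
  · -- c2 = 0 : everything degenerates
    obtain rfl := hc2z.symm
    refine ⟨tstar, tstar, ?_, ?_, ?_⟩
    · simp
    · simp
    · intro t ht
      simp [abs_nonneg]
  · have hd1 : Differentiable ℝ y1 := hy1.differentiable (by norm_num)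
    have hd2 : Differentiable ℝ y2 := hy2.differentiable (by norm_num)
    have hdd1 : Differentiable ℝ (deriv y1) := by
      have h := (contDiff_succ_iff_deriv.mp (show ContDiff ℝ (1+1) y1 by norm_num; exact hy1)).2.2
      exact h.differentiable (by norm_num)
    have hdd2 : Differentiable ℝ (deriv y2) := by
      have h := (contDiff_succ_iff_deriv.mp (show ContDiff ℝ (1+1) y2 by norm_num; exact hy2)).2.2
      exact h.differentiable (by norm_num)
    have hIcc : Set.Icc (tstar - c1/(4*c2)) (tstar + c1/(4*c2)) ⊆ Set.Icc (0:ℝ) T :=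
      fun x hx => ⟨(hsub hx).1.le, (hsub hx).2.le⟩
    rcases le_total 0 (deriv y1 tstar - deriv y2 tstar) with hD | hD
    · set g : ℝ → ℝ := fun t => y1 t - y2 t with hg
      have hgdiff : Differentiable ℝ g := hd1.sub hd2
      have hderiv : deriv g = fun t => deriv y1 t - deriv y2 t :=
        funext fun t => deriv_sub (hd1 t) (hd2 t)
      have hgdiff' : Differentiable ℝ (deriv g) := by rw [hderiv]; exact hdd1.sub hdd2
      have hdts : c1 ≤ deriv g tstar := by
        rw [hderiv]; rwa [abs_of_nonneg hD] at hgap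
      have hbound : ∀ t ∈ Set.Icc (tstar - c1/(4*c2)) (tstar + c1/(4*c2)),
          |deriv (deriv g) t| ≤ c2 := by
        intro t ht
        have h1 : deriv (deriv g) t = deriv (deriv y1) t - deriv (deriv y2) t := by
          rw [hderiv]; exact deriv_sub (hdd1 t) (hdd2 t)
        rw [h1]
        calc |deriv (deriv y1) t - deriv (deriv y2) t|
            ≤ |deriv (deriv y1) t| + |deriv (deriv y2) t| := abs_sub _ _
          _ ≤ c2 := hc2 t (hIcc ht)
      obtain ⟨l1, l2, hsub', hlen, hbd⟩ :=
        aux_key c1 c2 tstar g hgdiff hgdiff' hc1 hc2pos hdts hbound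
      exact ⟨l1, l2, hsub', hlen, fun t ht => hbd t ht⟩
    · set g : ℝ → ℝ := fun t => y2 t - y1 t with hg
      have hgdiff : Differentiable ℝ g := hd2.sub hd1
      have hderiv : deriv g = fun t => deriv y2 t - deriv y1 t :=
        funext fun t => deriv_sub (hd2 t) (hd1 t)
      have hgdiff' : Differentiable ℝ (deriv g) := by rw [hderiv]; exact hdd2.sub hdd1
      have hdts : c1 ≤ deriv g tstar := by
        rw [hderiv]
        rw [abs_of_nonpos (by linarith)] at hgap
        simp only; linarith
      have hbound : ∀ t ∈ Set.Icc (tstar - c1/(4*c2)) (tstar + c1/(4*c2)),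
          |deriv (deriv g) t| ≤ c2 := by
        intro t ht
        have h1 : deriv (deriv g) t = deriv (deriv y2) t - deriv (deriv y1) t := by
          rw [hderiv]; exact deriv_sub (hdd2 t) (hdd1 t)
        rw [h1]
        calc |deriv (deriv y2) t - deriv (deriv y1) t|
            ≤ |deriv (deriv y2) t| + |deriv (deriv y1) t| := abs_sub _ _
          _ ≤ c2 := by have := hc2 t (hIcc ht); linarith
      obtain ⟨l1, l2, hsub', hlen, hbd⟩ :=
        aux_key c1 c2 tstar g hgdiff hgdiff' hc1 hc2pos hdts hbound
      refine ⟨l1, l2, hsub', hlen, fun t ht => ?_⟩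
      have := hbd t ht
      rwa [abs_sub_comm] at this
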